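/- Let f : Z → X be a closed immersion of schemes with both Z and X reduced. Then the set-theoretic image of f is an open subset of X if and only if f is an open immersion. -/

import Mathlib

open AlgebraicGeometry CategoryTheory

/-- Let `f : Z ⟶ X` be a closed immersion of schemes with both `Z` and `X`
reduced.  Then the set-theoretic image of `f` is open in `X` if and only if `f` is an open
immersion. -/
theorem isOpenImmersion_iff_isOpen_range_of_isClosedImmersion
    {Z X : AlgebraicGeometry.Scheme} (f : Z ⟶ X) [IsClosedImmersion f]
    [IsReduced Z] [IsReduced X] :
    IsOpen (Set.range f.base) ↔ IsOpenImmersion f := by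
  constructor
  · intro h
    let U : X.Opens := ⟨Set.range f.base, h⟩
    let ι : U.toScheme ⟶ X := U.ι
    have hr : Set.range f.base ⊆ Set.range ι.base := by
      rw [Scheme.Opens.range_ι]; exact subset_rfl
    let g : Z ⟶ U.toScheme := IsOpenImmersion.lift ι f hr
    have hfac : g ≫ ι = f := IsOpenImmersion.lift_fac ι f hr
    have : IsClosedImmersion g := by
      have : IsClosedImmersion (g ≫ ι) := hfac ▸ ‹IsClosedImmersion f›
      exact IsClosedImmersion.of_comp g ι
    have hred : IsReduced U.toScheme := isReduced_of_isOpenImmersion ι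
    have hsurj : Surjective g := by
      constructor
      intro x
      have hx : (ι.base x : X) ∈ Set.range f.base := by
        exact x.2
      obtain ⟨z, hz⟩ := hx
      refine ⟨z, ι.isOpenEmbedding.injective ?_⟩
      rw [← Scheme.Hom.comp_apply, hfac, hz]
    have : IsIso g := isIso_of_isClosedImmersion_of_surjective g
    rw [← hfac]
    infer_instance
  · intro h
    exact f.isOpenEmbedding.isOpen_range
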